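/- arXiv:1110.3168 — 2 statements merged into one kernel-verified Lean document; each statement's English description precedes it below -/
import Mathlib

section
/- (Theorem 3.1 (i)) Let α, α^1, α^2, … : ℕ → A be sequences, x = p_p(α), x_n = p_p(α^n). Suppose that for every q ∈ ℕ there exist s, t ≥ q with α(s) ≠ α(t) (α is not constant after any rank). Then lim_{n→∞} ‖x_n − x‖_p = 0 in l^p(A) if and only if α^n → α in the Baire space N(A) (product topology, A discrete). -/
open scoped ENNReal
open Filter Topology

/-- For a sequence `α : ℕ → A`, the function `p_p(α) : A' → ℝ` (where `A' = A \ {z}`)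
given by `p_p(α)(b) = ∑_{k ∈ ℕ, α k = b} 2^{-(k+1)}`. -/
noncomputable def pFun {A : Type*} (z : A) (α : ℕ → A) (b : {b : A // b ≠ z}) : ℝ :=
  ∑' k : {k : ℕ | α k = (b : A)}, (2 : ℝ)⁻¹ ^ ((k : ℕ) + 1)

lemma summable_base : Summable (fun k : ℕ => (2 : ℝ)⁻¹ ^ (k + 1)) := by
  apply Summable.comp_injective (summable_geometric_of_lt_one (by norm_num) (by norm_num))
    (add_left_injective 1)

lemma tsum_base : ∑' k : ℕ, (2 : ℝ)⁻¹ ^ (k + 1) = 1 := by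
  have h : ∀ k : ℕ, (2 : ℝ)⁻¹ ^ (k + 1) = 2⁻¹ * 2⁻¹ ^ k := fun k => by ring
  rw [tsum_congr h, tsum_mul_left, tsum_geometric_of_lt_one (by norm_num) (by norm_num)]
  norm_num

lemma pFun_nonneg {A : Type*} (z : A) (α : ℕ → A) (b : {b : A // b ≠ z}) :
    0 ≤ pFun z α b :=
  tsum_nonneg fun k => by positivity

lemma pFun_eq_indicator {A : Type*} (z : A) (α : ℕ → A) (b : {b : A // b ≠ z}) :
    pFun z α b =
      ∑' k : ℕ, Set.indicator {k : ℕ | α k = (b : A)} (fun k => (2 : ℝ)⁻¹ ^ (k + 1)) k := by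
  unfold pFun
  exact tsum_subtype {k : ℕ | α k = (b : A)} (fun k => (2 : ℝ)⁻¹ ^ (k + 1))

lemma summable_pFun {A : Type*} (z : A) (α : ℕ → A) : Summable (pFun z α) := by
  classical
  apply summable_of_sum_le (c := 1) (pFun_nonneg z α)
  intro s
  have hind : ∀ b : {b : A // b ≠ z},
      Summable (Set.indicator {k : ℕ | α k = (b : A)} (fun k => (2 : ℝ)⁻¹ ^ (k + 1))) :=
    fun b => summable_base.indicator _
  have h1 : ∑ b ∈ s, pFun z α b
      = ∑' k : ℕ, ∑ b ∈ s, Set.indicator {k : ℕ | α k = (b : A)}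
          (fun k => (2 : ℝ)⁻¹ ^ (k + 1)) k := by
    rw [Finset.sum_congr rfl fun b _ => pFun_eq_indicator z α b]
    exact (Summable.tsum_finsetSum fun b _ => hind b).symm
  have hle : ∀ k : ℕ, ∑ b ∈ s, Set.indicator {k : ℕ | α k = (b : A)}
      (fun k => (2 : ℝ)⁻¹ ^ (k + 1)) k ≤ (2 : ℝ)⁻¹ ^ (k + 1) := by
    intro k
    by_cases hz : α k = z
    · have : ∀ b ∈ s, Set.indicator {k : ℕ | α k = (b : A)}
          (fun k => (2 : ℝ)⁻¹ ^ (k + 1)) k = 0 := by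
        intro b _
        apply Set.indicator_of_notMem
        simp only [Set.mem_setOf_eq, hz]
        exact fun h => b.2 h.symm
      rw [Finset.sum_congr rfl this, Finset.sum_const, smul_zero]
      positivity
    · have hb : ∀ b ∈ s, Set.indicator {k : ℕ | α k = (b : A)}
          (fun k => (2 : ℝ)⁻¹ ^ (k + 1)) k
          = if b = (⟨α k, hz⟩ : {b : A // b ≠ z}) then (2 : ℝ)⁻¹ ^ (k + 1) else 0 := by
        intro b _
        rw [Set.indicator_apply]
        congr 1
        simp only [Set.mem_setOf_eq, eq_comm (a := α k)]
        rw [Subtype.ext_iff]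
      rw [Finset.sum_congr rfl hb, Finset.sum_ite_eq' s _ (fun _ => (2 : ℝ)⁻¹ ^ (k + 1))]
      split_ifs
      · exact le_rfl
      · positivity
  have hnn : ∀ k : ℕ, 0 ≤ ∑ b ∈ s, Set.indicator {k : ℕ | α k = (b : A)}
      (fun k => (2 : ℝ)⁻¹ ^ (k + 1)) k := by
    intro k
    apply Finset.sum_nonneg
    intro b _
    exact Set.indicator_nonneg (fun k _ => by positivity) k
  rw [h1, ← tsum_base]
  exact Summable.tsum_le_tsum hle (Summable.of_nonneg_of_le hnn hle summable_base) summable_base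

lemma pFun_memℓp {A : Type*} (z : A) (α : ℕ → A) {P : ℝ≥0∞} (hP : 1 ≤ P) :
    Memℓp (pFun z α) P := by
  apply Memℓp.of_exponent_ge (q := 1) _ hP
  apply memℓp_gen
  simp only [ENNReal.toReal_one, Real.rpow_one]
  apply Summable.congr (summable_pFun z α)
  intro b
  rw [Real.norm_of_nonneg (pFun_nonneg z α b)]

/-- The map `p_p : N(A) → l^p(A)`, sending `α` to the element of `l^p(A)` with
coordinates `p_p(α)(b) = ∑_{k ∈ ℕ, α k = b} 2^{-(k+1)}`. -/
noncomputable def pp {A : Type*} (z : A) (α : ℕ → A) (P : ℝ≥0∞) [Fact (1 ≤ P)] :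
    lp (fun _ : {b : A // b ≠ z} => ℝ) P :=
  ⟨pFun z α, pFun_memℓp z α Fact.out⟩

/-! ### Auxiliary infrastructure -/

noncomputable def msum (S : Set ℕ) : ℝ :=
  ∑' k : ℕ, S.indicator (fun k => (2 : ℝ)⁻¹ ^ (k + 1)) k

lemma summable_ind (S : Set ℕ) :
    Summable (S.indicator fun k => (2 : ℝ)⁻¹ ^ (k + 1)) :=
  summable_base.indicator S

lemma msum_nonneg (S : Set ℕ) : 0 ≤ msum S :=
  tsum_nonneg fun k => Set.indicator_nonneg (fun _ _ => by positivity) k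

lemma msum_mono {S T : Set ℕ} (h : S ⊆ T) : msum S ≤ msum T :=
  Summable.tsum_le_tsum
    (fun k => Set.indicator_le_indicator_of_subset h (fun _ => by positivity) k)
    (summable_ind S) (summable_ind T)

lemma msum_union {S T : Set ℕ} (h : Disjoint S T) :
    msum (S ∪ T) = msum S + msum T := by
  unfold msum
  rw [← Summable.tsum_add (summable_ind S) (summable_ind T)]
  exact tsum_congr fun k => by rw [Set.indicator_union_of_disjoint h]

lemma msum_singleton (k : ℕ) : msum {k} = (2 : ℝ)⁻¹ ^ (k + 1) := by
  unfold msum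
  rw [tsum_eq_single k]
  · simp
  · intro j hj
    exact Set.indicator_of_notMem (by simpa using hj) _

lemma msum_Ici (m : ℕ) : msum (Set.Ici m) = (2 : ℝ)⁻¹ ^ m := by
  induction m with
  | zero =>
    have h : Set.Ici (0 : ℕ) = Set.univ := by ext j; simp
    unfold msum
    rw [h]
    simpa using tsum_base
  | succ m ih =>
    have h : Set.Ici m = {m} ∪ Set.Ici (m + 1) := by
      ext j
      simp only [Set.mem_Ici, Set.mem_union, Set.mem_singleton_iff]
      omega
    have hd : Disjoint ({m} : Set ℕ) (Set.Ici (m + 1)) := by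
      rw [Set.disjoint_left]
      intro j hj hj'
      simp only [Set.mem_singleton_iff] at hj
      simp only [Set.mem_Ici] at hj'
      omega
    rw [h, msum_union hd, msum_singleton] at ih
    have : (2 : ℝ)⁻¹ ^ (m + 1) = (2 : ℝ)⁻¹ ^ m - (2 : ℝ)⁻¹ ^ (m + 1) := by
      rw [pow_succ]
      ring
    linarith

lemma msum_le_Ici {S : Set ℕ} {m : ℕ} (h : S ⊆ Set.Ici m) :
    msum S ≤ (2 : ℝ)⁻¹ ^ m := by
  rw [← msum_Ici m]; exact msum_mono h

lemma wgt_le_msum {S : Set ℕ} {k : ℕ} (h : k ∈ S) :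
    (2 : ℝ)⁻¹ ^ (k + 1) ≤ msum S := by
  rw [← msum_singleton k]
  exact msum_mono (Set.singleton_subset_iff.mpr h)

lemma msum_insert_le {S : Set ℕ} {m j : ℕ} (hS : S ⊆ Set.Ici m) (hj : m ≤ j)
    (hjS : j ∉ S) : msum S + (2 : ℝ)⁻¹ ^ (j + 1) ≤ (2 : ℝ)⁻¹ ^ m := by
  have h : msum S + (2 : ℝ)⁻¹ ^ (j + 1) = msum (S ∪ {j}) := by
    rw [msum_union (Set.disjoint_singleton_right.mpr hjS), msum_singleton]
  rw [h]
  exact msum_le_Ici (Set.union_subset hS (by simpa using hj))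

lemma msum_pair_le {S T : Set ℕ} {m : ℕ} (hd : Disjoint S T)
    (hS : S ⊆ Set.Ici m) (hT : T ⊆ Set.Ici m) :
    msum S + msum T ≤ (2 : ℝ)⁻¹ ^ m := by
  rw [← msum_union hd]
  exact msum_le_Ici (Set.union_subset hS hT)

lemma msum_split (S : Set ℕ) (m : ℕ) :
    msum S = msum (S ∩ Set.Iio m) + msum (S ∩ Set.Ici m) := by
  rw [← msum_union]
  · congr 1
    rw [← Set.inter_union_distrib_left, Set.Iio_union_Ici, Set.inter_univ]
  · exact (Set.disjoint_left.mpr fun j hj hj' => by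
      simp only [Set.mem_inter_iff, Set.mem_Iio] at hj
      simp only [Set.mem_inter_iff, Set.mem_Ici] at hj'
      omega)

lemma pFun_eq_msum {A : Type*} (z : A) (α : ℕ → A) (b : {b : A // b ≠ z}) :
    pFun z α b = msum {j | α j = (b : A)} :=
  pFun_eq_indicator z α b

lemma msum_inter_Ici_of_not_mem {S : Set ℕ} {k : ℕ} (h : k ∉ S) :
    S ∩ Set.Ici k = S ∩ Set.Ici (k + 1) := by
  ext j
  simp only [Set.mem_inter_iff, Set.mem_Ici]
  constructor
  · rintro ⟨h1, h2⟩
    refine ⟨h1, ?_⟩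
    rcases Nat.lt_or_ge k j with h3 | h3
    · omega
    · exact absurd (le_antisymm h3 h2 ▸ h1) h
  · rintro ⟨h1, h2⟩
    exact ⟨h1, by omega⟩

lemma msum_inter_Ici_of_mem {S : Set ℕ} {k : ℕ} (h : k ∈ S) :
    msum (S ∩ Set.Ici k) = (2 : ℝ)⁻¹ ^ (k + 1) + msum (S ∩ Set.Ici (k + 1)) := by
  have hset : S ∩ Set.Ici k = {k} ∪ (S ∩ Set.Ici (k + 1)) := by
    ext j
    simp only [Set.mem_inter_iff, Set.mem_Ici, Set.mem_union, Set.mem_singleton_iff]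
    constructor
    · rintro ⟨h1, h2⟩
      rcases Nat.eq_or_lt_of_le h2 with h3 | h3
      · exact Or.inl h3.symm
      · exact Or.inr ⟨h1, h3⟩
    · rintro (rfl | ⟨h1, h2⟩)
      · exact ⟨h, le_rfl⟩
      · exact ⟨h1, by omega⟩
  have hd : Disjoint ({k} : Set ℕ) (S ∩ Set.Ici (k + 1)) := by
    rw [Set.disjoint_left]
    intro j hj hj'
    simp only [Set.mem_singleton_iff] at hj
    simp only [Set.mem_inter_iff, Set.mem_Ici] at hj'
    omega
  rw [hset, msum_union hd, msum_singleton]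

/-- Coordinate-wise difference formula when `α` and `β` agree below `k`. -/
lemma pFun_sub_eq {A : Type*} (z : A) {α β : ℕ → A} {k : ℕ}
    (hag : ∀ j < k, β j = α j) (b : {b : A // b ≠ z}) :
    pFun z β b - pFun z α b
      = msum ({j | β j = (b : A)} ∩ Set.Ici k)
        - msum ({j | α j = (b : A)} ∩ Set.Ici k) := by
  rw [pFun_eq_msum, pFun_eq_msum, msum_split {j | β j = (b : A)} k,
    msum_split {j | α j = (b : A)} k]
  have h : {j | β j = (b : A)} ∩ Set.Iio k = {j | α j = (b : A)} ∩ Set.Iio k := by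
    ext j
    simp only [Set.mem_inter_iff, Set.mem_setOf_eq, Set.mem_Iio]
    constructor
    · rintro ⟨h1, h2⟩; exact ⟨(hag j h2) ▸ h1, h2⟩
    · rintro ⟨h1, h2⟩; exact ⟨(hag j h2).trans h1, h2⟩
  rw [h]
  ring

/-- Sum over finitely many coordinates of the tail masses is at most the total tail mass. -/
lemma sum_msum_le {A : Type*} (z : A) (β : ℕ → A) (m : ℕ)
    (s : Finset {b : A // b ≠ z}) :
    ∑ b ∈ s, msum ({j | β j = (b : A)} ∩ Set.Ici m) ≤ (2 : ℝ)⁻¹ ^ m := by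
  classical
  have h1 : ∑ b ∈ s, msum ({j | β j = (b : A)} ∩ Set.Ici m)
      = ∑' k : ℕ, ∑ b ∈ s, ({j | β j = (b : A)} ∩ Set.Ici m).indicator
          (fun k => (2 : ℝ)⁻¹ ^ (k + 1)) k := by
    unfold msum
    exact (Summable.tsum_finsetSum fun b _ => summable_ind _).symm
  have hle : ∀ k : ℕ, ∑ b ∈ s, ({j | β j = (b : A)} ∩ Set.Ici m).indicator
      (fun k => (2 : ℝ)⁻¹ ^ (k + 1)) k
      ≤ (Set.Ici m).indicator (fun k => (2 : ℝ)⁻¹ ^ (k + 1)) k := by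
    intro k
    by_cases hk : m ≤ k
    · rw [Set.indicator_of_mem (by simpa using hk)]
      by_cases hz : β k = z
      · have : ∀ b ∈ s, ({j | β j = (b : A)} ∩ Set.Ici m).indicator
            (fun k => (2 : ℝ)⁻¹ ^ (k + 1)) k = 0 := by
          intro b _
          apply Set.indicator_of_notMem
          simp only [Set.mem_inter_iff, Set.mem_setOf_eq, hz]
          rintro ⟨h3, -⟩
          exact b.2 h3.symm
        rw [Finset.sum_congr rfl this, Finset.sum_const, smul_zero]
        positivity
      · have hb : ∀ b ∈ s, ({j | β j = (b : A)} ∩ Set.Ici m).indicator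
            (fun k => (2 : ℝ)⁻¹ ^ (k + 1)) k
            = if b = (⟨β k, hz⟩ : {b : A // b ≠ z}) then (2 : ℝ)⁻¹ ^ (k + 1) else 0 := by
          intro b _
          rw [Set.indicator_apply]
          congr 1
          simp only [Set.mem_inter_iff, Set.mem_setOf_eq, Set.mem_Ici, hk, and_true,
            eq_comm (a := β k)]
          rw [Subtype.ext_iff]
        rw [Finset.sum_congr rfl hb,
          Finset.sum_ite_eq' s _ (fun _ => (2 : ℝ)⁻¹ ^ (k + 1))]
        split_ifs
        · exact le_rfl
        · positivity
    · have h0 : ∀ b ∈ s, ({j | β j = (b : A)} ∩ Set.Ici m).indicator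
          (fun k => (2 : ℝ)⁻¹ ^ (k + 1)) k = 0 := by
        intro b _
        apply Set.indicator_of_notMem
        simp only [Set.mem_inter_iff, Set.mem_Ici]
        rintro ⟨-, h3⟩
        exact hk h3
      rw [Finset.sum_congr rfl h0, Finset.sum_const, smul_zero,
        Set.indicator_of_notMem (by simpa using hk)]
  have hnn : ∀ k : ℕ, 0 ≤ ∑ b ∈ s, ({j | β j = (b : A)} ∩ Set.Ici m).indicator
      (fun k => (2 : ℝ)⁻¹ ^ (k + 1)) k := by
    intro k
    exact Finset.sum_nonneg fun b _ =>
      Set.indicator_nonneg (fun _ _ => by positivity) k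
  rw [h1, ← msum_Ici m]
  exact Summable.tsum_le_tsum hle
    (Summable.of_nonneg_of_le hnn hle (summable_ind _)) (summable_ind _)

lemma pp_apply {A : Type*} (z : A) (α : ℕ → A) (P : ℝ≥0∞) [Fact (1 ≤ P)]
    (b : {b : A // b ≠ z}) : (pp z α P : ∀ _ : {b : A // b ≠ z}, ℝ) b = pFun z α b := rfl

lemma P_ne_zero {P : ℝ≥0∞} [h : Fact (1 ≤ P)] : P ≠ 0 :=
  (lt_of_lt_of_le zero_lt_one h.out).ne'

lemma pp_sub_apply {A : Type*} (z : A) (P : ℝ≥0∞) [Fact (1 ≤ P)]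
    (α β : ℕ → A) (b : {b : A // b ≠ z}) :
    (pp z β P - pp z α P : lp (fun _ : {b : A // b ≠ z} => ℝ) P) b
      = pFun z β b - pFun z α b := by
  rw [lp.coeFn_sub, Pi.sub_apply, pp_apply, pp_apply]

lemma coord_abs_le_norm {A : Type*} (z : A) (P : ℝ≥0∞) [Fact (1 ≤ P)]
    (α β : ℕ → A) (b : {b : A // b ≠ z}) :
    |pFun z β b - pFun z α b| ≤ ‖pp z β P - pp z α P‖ := by
  have h := lp.norm_apply_le_norm (E := fun _ : {b : A // b ≠ z} => ℝ)
    P_ne_zero (pp z β P - pp z α P) b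
  rwa [pp_sub_apply, Real.norm_eq_abs] at h

/-- Upper bound: if `β` agrees with `α` below `m`, the `ℓᵖ` distance is at most
`(2 · 2⁻ᵐ) ^ (1 / p)`. -/
lemma norm_pp_sub_le {A : Type*} (z : A) (P : ℝ≥0∞) [Fact (1 ≤ P)] (hP : P ≠ ∞)
    (α β : ℕ → A) (m : ℕ) (hag : ∀ j < m, β j = α j) :
    ‖pp z β P - pp z α P‖ ≤ (2 * (2 : ℝ)⁻¹ ^ m) ^ (1 / P.toReal) := by
  have hpr1 : (1 : ℝ) ≤ P.toReal := by
    have := ENNReal.toReal_mono hP (Fact.out : 1 ≤ P)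
    simpa using this
  have hpr : 0 < P.toReal := lt_of_lt_of_le zero_lt_one hpr1
  have hCpos : (0 : ℝ) < 2 * (2 : ℝ)⁻¹ ^ m := by positivity
  apply lp.norm_le_of_forall_sum_le hpr (by positivity)
  intro s
  have hCpow : ((2 * (2 : ℝ)⁻¹ ^ m) ^ (1 / P.toReal)) ^ P.toReal
      = 2 * (2 : ℝ)⁻¹ ^ m := by
    rw [← Real.rpow_mul hCpos.le, one_div_mul_cancel hpr.ne', Real.rpow_one]
  rw [hCpow]
  have key : ∀ b : {b : A // b ≠ z},
      ‖(pp z β P - pp z α P : lp _ P) b‖ ^ P.toReal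
        ≤ msum ({j | β j = (b : A)} ∩ Set.Ici m)
          + msum ({j | α j = (b : A)} ∩ Set.Ici m) := by
    intro b
    set x := msum ({j | β j = (b : A)} ∩ Set.Ici m) with hx
    set y := msum ({j | α j = (b : A)} ∩ Set.Ici m) with hy
    have hx0 : 0 ≤ x := msum_nonneg _
    have hy0 : 0 ≤ y := msum_nonneg _
    have hxm : x ≤ (2 : ℝ)⁻¹ ^ m := msum_le_Ici Set.inter_subset_right
    have hym : y ≤ (2 : ℝ)⁻¹ ^ m := msum_le_Ici Set.inter_subset_right
    have habs : ‖(pp z β P - pp z α P : lp _ P) b‖ ≤ min ((2 : ℝ)⁻¹ ^ m) (x + y) := by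
      rw [pp_sub_apply, Real.norm_eq_abs, pFun_sub_eq z hag b, ← hx, ← hy, le_min_iff]
      constructor
      · rw [abs_sub_le_iff]; constructor <;> linarith
      · rw [abs_sub_le_iff]; constructor <;> linarith
    have hm1 : (2 : ℝ)⁻¹ ^ m ≤ 1 := by
      apply pow_le_one₀ <;> norm_num
    have hnn : (0 : ℝ) ≤ ‖(pp z β P - pp z α P : lp _ P) b‖ := norm_nonneg _
    rcases eq_or_lt_of_le hnn with h0 | h0
    · rw [← h0, Real.zero_rpow hpr.ne']
      exact add_nonneg hx0 hy0
    · calc ‖(pp z β P - pp z α P : lp _ P) b‖ ^ P.toReal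
          ≤ ‖(pp z β P - pp z α P : lp _ P) b‖ ^ (1 : ℝ) :=
            Real.rpow_le_rpow_of_exponent_ge h0
              ((habs.trans (min_le_left _ _)).trans hm1) hpr1
        _ = ‖(pp z β P - pp z α P : lp _ P) b‖ := Real.rpow_one _
        _ ≤ x + y := habs.trans (min_le_right _ _)
  calc ∑ b ∈ s, ‖(pp z β P - pp z α P : lp _ P) b‖ ^ P.toReal
      ≤ ∑ b ∈ s, (msum ({j | β j = (b : A)} ∩ Set.Ici m)
          + msum ({j | α j = (b : A)} ∩ Set.Ici m)) :=
        Finset.sum_le_sum fun b _ => key b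
    _ = (∑ b ∈ s, msum ({j | β j = (b : A)} ∩ Set.Ici m))
        + ∑ b ∈ s, msum ({j | α j = (b : A)} ∩ Set.Ici m) := Finset.sum_add_distrib
    _ ≤ (2 : ℝ)⁻¹ ^ m + (2 : ℝ)⁻¹ ^ m :=
        add_le_add (sum_msum_le z β m s) (sum_msum_le z α m s)
    _ = 2 * (2 : ℝ)⁻¹ ^ m := by ring

/-- Key lower bound: if `α` is not eventually constant, then for each `k` there is a
uniform `ε > 0` such that whenever `β` agrees with `α` below `k` but differs at `k`,
some coordinate of `p_p(β) - p_p(α)` has absolute value at least `ε`. -/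
lemma exists_coord_lb {A : Type*} (z : A) (α : ℕ → A)
    (hnc : ∀ q : ℕ, ∃ s t : ℕ, q ≤ s ∧ q ≤ t ∧ α s ≠ α t) (k : ℕ) :
    ∃ ε > (0 : ℝ), ∀ β : ℕ → A, (∀ j < k, β j = α j) → β k ≠ α k →
      ∃ b : {b : A // b ≠ z}, ε ≤ |pFun z β b - pFun z α b| := by
  classical
  obtain ⟨s, t, hs, ht, hst⟩ := hnc (k + 1)
  set m₀ := max s t with hm₀
  -- uniform bound on any α-tail mass: some position among s,t misses any given value
  have F0 : ∀ c : A, msum ({j | α j = c} ∩ Set.Ici (k + 1))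
      ≤ (2 : ℝ)⁻¹ ^ (k + 1) - (2 : ℝ)⁻¹ ^ (m₀ + 1) := by
    intro c
    obtain ⟨j, hj1, hj2⟩ : ∃ j, (k + 1 ≤ j ∧ j ≤ m₀) ∧ α j ≠ c := by
      by_cases hsc : α s = c
      · exact ⟨t, ⟨ht, le_max_right s t⟩, fun h => hst (hsc.trans h.symm)⟩
      · exact ⟨s, ⟨hs, le_max_left s t⟩, hsc⟩
    have h1 : msum ({j | α j = c} ∩ Set.Ici (k + 1)) + (2 : ℝ)⁻¹ ^ (j + 1)
        ≤ (2 : ℝ)⁻¹ ^ (k + 1) := by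
      apply msum_insert_le Set.inter_subset_right hj1.1
      simp only [Set.mem_inter_iff, Set.mem_setOf_eq, not_and]
      intro h; exact absurd h hj2
    have h2 : (2 : ℝ)⁻¹ ^ (m₀ + 1) ≤ (2 : ℝ)⁻¹ ^ (j + 1) := by
      apply pow_le_pow_of_le_one (by norm_num) (by norm_num)
      omega
    linarith
  -- the coordinate `β k` works whenever `β k ≠ z`
  have Fc : ∀ (β : ℕ → A) (_ : ∀ j < k, β j = α j) (hne : β k ≠ α k) (hc : β k ≠ z),
      (2 : ℝ)⁻¹ ^ (m₀ + 1) ≤ |pFun z β ⟨β k, hc⟩ - pFun z α ⟨β k, hc⟩| := by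
    intro β hag hne hc
    rw [pFun_sub_eq z hag ⟨β k, hc⟩]
    have hTk : k ∈ {j | β j = β k} := rfl
    have hT := msum_inter_Ici_of_mem (S := {j | β j = β k}) hTk
    have hT2 := msum_nonneg ({j | β j = β k} ∩ Set.Ici (k + 1))
    have hSk : k ∉ {j | α j = β k} := fun h => hne h.symm
    have hS := msum_inter_Ici_of_not_mem (S := {j | α j = β k}) hSk
    have hS2 := F0 (β k)
    simp only [Subtype.coe_mk]
    rw [hS, hT]
    refine le_trans (by linarith) (le_abs_self _)
  by_cases hcaseI : ∃ u, k < u ∧ α u ≠ α k ∧ α u ≠ z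
  · -- Case I
    obtain ⟨u, hu1, hu2, hu3⟩ := hcaseI
    refine ⟨min ((2 : ℝ)⁻¹ ^ (m₀ + 1)) ((2 : ℝ)⁻¹ ^ (u + 2)), by positivity, ?_⟩
    intro β hag hne
    have hmin2 : min ((2 : ℝ)⁻¹ ^ (m₀ + 1)) ((2 : ℝ)⁻¹ ^ (u + 2)) ≤ (2 : ℝ)⁻¹ ^ (u + 2) :=
      min_le_right _ _
    by_cases hc : β k = z
    · -- β k = z, hence α k ≠ z
      have hbz : α k ≠ z := fun h => hne (hc.trans h.symm)
      set gap := (2 : ℝ)⁻¹ ^ (k + 1) - msum ({j | β j = α k} ∩ Set.Ici (k + 1)) with hgapdef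
      have hgap0 : 0 ≤ gap := by
        have := msum_le_Ici (S := {j | β j = α k} ∩ Set.Ici (k + 1))
          Set.inter_subset_right
        simp only [hgapdef]; linarith
      by_cases hgap : (2 : ℝ)⁻¹ ^ (u + 2) ≤ gap
      · -- use coordinate α k
        refine ⟨⟨α k, hbz⟩, ?_⟩
        rw [pFun_sub_eq z hag ⟨α k, hbz⟩]
        simp only [Subtype.coe_mk]
        have hTk : k ∉ {j | β j = α k} := fun h => hne h
        have hT := msum_inter_Ici_of_not_mem (S := {j | β j = α k}) hTk
        have hSk : k ∈ {j | α j = α k} := rfl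
        have hS := msum_inter_Ici_of_mem (S := {j | α j = α k}) hSk
        have hS2 := msum_nonneg ({j | α j = α k} ∩ Set.Ici (k + 1))
        rw [hT, hS]
        refine le_abs.mpr (Or.inr ?_)
        simp only [hgapdef] at hgap
        linarith
      · -- use coordinate α u
        push_neg at hgap
        refine ⟨⟨α u, hu3⟩, ?_⟩
        rw [pFun_sub_eq z hag ⟨α u, hu3⟩]
        simp only [Subtype.coe_mk]
        have hTk : k ∉ {j | β j = α u} := fun h => hu3 (h.symm.trans hc)
        have hT := msum_inter_Ici_of_not_mem (S := {j | β j = α u}) hTk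
        have hSk : k ∉ {j | α j = α u} := fun h => hu2 h.symm
        have hS := msum_inter_Ici_of_not_mem (S := {j | α j = α u}) hSk
        have hdisj : Disjoint ({j | β j = α u} ∩ Set.Ici (k + 1))
            ({j | β j = α k} ∩ Set.Ici (k + 1)) := by
          rw [Set.disjoint_left]
          rintro j ⟨hj1, -⟩ ⟨hj2, -⟩
          exact hu2 (hj1.symm.trans hj2)
        have hpair := msum_pair_le hdisj Set.inter_subset_right Set.inter_subset_right
        have hTu : msum ({j | β j = α u} ∩ Set.Ici (k + 1)) ≤ gap := by
          simp only [hgapdef]; linarith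
        have hSu : (2 : ℝ)⁻¹ ^ (u + 1) ≤ msum ({j | α j = α u} ∩ Set.Ici (k + 1)) := by
          apply wgt_le_msum
          exact ⟨rfl, by simpa using hu1⟩
        rw [hT, hS]
        refine le_abs.mpr (Or.inr ?_)
        have hsplit : (2 : ℝ)⁻¹ ^ (u + 1) = (2 : ℝ)⁻¹ ^ (u + 2) + (2 : ℝ)⁻¹ ^ (u + 2) := by
          rw [pow_succ]; ring
        linarith
    · refine ⟨⟨β k, hc⟩, (min_le_left _ _).trans (Fc β hag hne hc)⟩
  · -- Case II: beyond k, α takes only the values α k and z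
    push_neg at hcaseI
    obtain ⟨s', t', hs', ht', hst'⟩ := hnc (k + 1)
    have hvals : ∀ u, k < u → α u = α k ∨ α u = z := by
      intro u hu
      by_cases h : α u = α k
      · exact Or.inl h
      · exact Or.inr (hcaseI u hu h)
    have hexb : ∃ j, k + 1 ≤ j ∧ α j = α k ∧ α k ≠ z := by
      rcases hvals s' (by omega) with h1 | h1 <;> rcases hvals t' (by omega) with h2 | h2
      · exact absurd (h1.trans h2.symm) hst'
      · exact ⟨s', hs', h1, fun hz => hst' (by rw [h1, hz, h2])⟩
      · exact ⟨t', ht', h2, fun hz => hst' (by rw [h1, h2, hz])⟩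
      · exact absurd (h1.trans h2.symm) hst'
    obtain ⟨j, hj1, hj2, hbz⟩ := hexb
    refine ⟨min ((2 : ℝ)⁻¹ ^ (m₀ + 1)) ((2 : ℝ)⁻¹ ^ (j + 1)), by positivity, ?_⟩
    intro β hag hne
    by_cases hc : β k = z
    · -- use coordinate α k
      refine ⟨⟨α k, hbz⟩, ?_⟩
      rw [pFun_sub_eq z hag ⟨α k, hbz⟩]
      simp only [Subtype.coe_mk]
      have hTk : k ∉ {j | β j = α k} := fun h => hne h
      have hT := msum_inter_Ici_of_not_mem (S := {j | β j = α k}) hTk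
      have hSk : k ∈ {j | α j = α k} := rfl
      have hS := msum_inter_Ici_of_mem (S := {j | α j = α k}) hSk
      have hTle : msum ({j | β j = α k} ∩ Set.Ici (k + 1)) ≤ (2 : ℝ)⁻¹ ^ (k + 1) :=
        msum_le_Ici Set.inter_subset_right
      have hSge : (2 : ℝ)⁻¹ ^ (j + 1) ≤ msum ({j' | α j' = α k} ∩ Set.Ici (k + 1)) := by
        apply wgt_le_msum
        exact ⟨hj2, by simpa using hj1⟩
      rw [hT, hS]
      refine le_abs.mpr (Or.inr ?_)
      have hmin : min ((2 : ℝ)⁻¹ ^ (m₀ + 1)) ((2 : ℝ)⁻¹ ^ (j + 1)) ≤ (2 : ℝ)⁻¹ ^ (j + 1) :=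
        min_le_right _ _
      linarith
    · refine ⟨⟨β k, hc⟩, (min_le_left _ _).trans (Fc β hag hne hc)⟩


/-- Theorem 3.1 (i). If `α` is not constant after any rank, then
`‖p_p(αⁿ) - p_p(α)‖ → 0` in `l^p(A)` iff `αⁿ → α` in the Baire space `N(A)` (product
topology, `A` discrete). -/
theorem norm_conv_iff_baire_conv {A : Type*} [Infinite A] [TopologicalSpace A]
    [DiscreteTopology A] (z : A) (P : ℝ≥0∞) [Fact (1 ≤ P)] (hP : P ≠ ∞)
    (α : ℕ → A) (αs : ℕ → ℕ → A)
    (hnc : ∀ q : ℕ, ∃ s t : ℕ, q ≤ s ∧ q ≤ t ∧ α s ≠ α t) :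
    Tendsto (fun n : ℕ => ‖pp z (αs n) P - pp z α P‖) atTop (𝓝 0) ↔
      Tendsto (fun n : ℕ => αs n) atTop (𝓝 α) := by
  have baire : Tendsto (fun n : ℕ => αs n) atTop (𝓝 α) ↔
      ∀ k : ℕ, ∀ᶠ n in atTop, αs n k = α k := by
    rw [tendsto_pi_nhds]
    refine forall_congr' fun k => ?_
    rw [nhds_discrete, tendsto_pure]
  rw [baire]
  constructor
  · intro hnorm
    have Q : ∀ k : ℕ, ∀ᶠ n in atTop, ∀ j, j < k → αs n j = α j := by
      intro k
      induction k with
      | zero => exact Filter.Eventually.of_forall fun n j hj => absurd hj (Nat.not_lt_zero j)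
      | succ k ih =>
        have step : ∀ᶠ n in atTop, αs n k = α k := by
          by_contra hcon
          rw [Filter.not_eventually] at hcon
          obtain ⟨ε, hε, hLB⟩ := exists_coord_lb z α hnc k
          have hev := hnorm.eventually_lt_const hε
          obtain ⟨n, hne, hpre, hlt⟩ := (hcon.and_eventually (ih.and hev)).exists
          obtain ⟨b, hb⟩ := hLB (αs n) (fun j hj => hpre j hj) hne
          have h2 := coord_abs_le_norm z P α (αs n) b
          linarith
        filter_upwards [ih, step] with n h1 h2 j hj
        rcases Nat.lt_or_ge j k with h | h
        · exact h1 j h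
        · have hjk : j = k := by omega
          rw [hjk]; exact h2
    intro k
    exact (Q (k + 1)).mono fun n h => h k (Nat.lt_succ_self k)
  · intro hconv
    have hpr1 : (1 : ℝ) ≤ P.toReal := by
      have := ENNReal.toReal_mono hP (Fact.out : 1 ≤ P)
      simpa using this
    have hpr : 0 < P.toReal := lt_of_lt_of_le zero_lt_one hpr1
    have key : ∀ ε : ℝ, 0 < ε → ∀ᶠ n in atTop, ‖pp z (αs n) P - pp z α P‖ < ε := by
      intro ε hε
      have htends : Tendsto (fun m : ℕ => (2 * (2 : ℝ)⁻¹ ^ m) ^ (1 / P.toReal))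
          atTop (𝓝 0) := by
        have h1 : Tendsto (fun m : ℕ => (2 * (2 : ℝ)⁻¹ ^ m : ℝ)) atTop (𝓝 0) := by
          have h2 := tendsto_pow_atTop_nhds_zero_of_lt_one
            (r := (2 : ℝ)⁻¹) (by norm_num) (by norm_num)
          simpa using h2.const_mul (2 : ℝ)
        have h3 := h1.rpow_const (p := 1 / P.toReal) (Or.inr (by positivity))
        rwa [Real.zero_rpow (by positivity : (0 : ℝ) < 1 / P.toReal).ne'] at h3
      obtain ⟨m, hm⟩ := (htends.eventually_lt_const hε).exists
      have hag : ∀ᶠ n in atTop, ∀ j < m, αs n j = α j := by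
        have h4 := (Filter.eventually_all_finset (Finset.range m)
          (p := fun j (n : ℕ) => αs n j = α j)).mpr fun j _ => hconv j
        exact h4.mono fun n h j hj => h j (Finset.mem_range.mpr hj)
      filter_upwards [hag] with n h
      exact lt_of_le_of_lt (norm_pp_sub_le z P hP α (αs n) m h) hm
    rw [Metric.tendsto_nhds]
    intro ε hε
    filter_upwards [key ε hε] with n h
    rw [Real.dist_eq, sub_zero, abs_of_nonneg (norm_nonneg _)]
    exact h
end

section
/- (Remark 3.1) The topological structure of ω_p^A is independent of p: for all real p, q ≥ 1 and all sequences (α^n)_{n≥1} and α in N(A), lim_{n→∞} ‖p_p(α^n) − p_p(α)‖_p = 0 if and only if lim_{n→∞} ‖p_q(α^n) − p_q(α)‖_q = 0; equivalently, the identity map from ω_p^A with the metric induced from l^p(A) to ω_q^A with the metric induced from l^q(A) (these two sets consisting of the same functions A' → ℝ) is a homeomorphism. -/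
open scoped ENNReal
open Filter Topology

section Aux

open Classical in
lemma sum_indicator_le_base {A : Type*} (z : A) (α : ℕ → A) (s : Finset {b : A // b ≠ z})
    (k : ℕ) : ∑ b ∈ s, Set.indicator {k : ℕ | α k = (b : A)}
      (fun k => (2 : ℝ)⁻¹ ^ (k + 1)) k ≤ (2 : ℝ)⁻¹ ^ (k + 1) := by
  by_cases hz : α k = z
  · have : ∀ b ∈ s, Set.indicator {k : ℕ | α k = (b : A)}
        (fun k => (2 : ℝ)⁻¹ ^ (k + 1)) k = 0 := by
      intro b _
      apply Set.indicator_of_notMem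
      simp only [Set.mem_setOf_eq, hz]
      exact fun h => b.2 h.symm
    rw [Finset.sum_congr rfl this, Finset.sum_const, smul_zero]
    positivity
  · have hb : ∀ b ∈ s, Set.indicator {k : ℕ | α k = (b : A)}
        (fun k => (2 : ℝ)⁻¹ ^ (k + 1)) k
        = if b = (⟨α k, hz⟩ : {b : A // b ≠ z}) then (2 : ℝ)⁻¹ ^ (k + 1) else 0 := by
      intro b _
      rw [Set.indicator_apply]
      congr 1
      simp only [Set.mem_setOf_eq, eq_comm (a := α k)]
      rw [Subtype.ext_iff]
    rw [Finset.sum_congr rfl hb, Finset.sum_ite_eq' s _ (fun _ => (2 : ℝ)⁻¹ ^ (k + 1))]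
    split_ifs
    · exact le_rfl
    · positivity

lemma summable_indicator_base {A : Type*} (z : A) (α : ℕ → A) (b : {b : A // b ≠ z}) :
    Summable (Set.indicator {k : ℕ | α k = (b : A)} (fun k => (2 : ℝ)⁻¹ ^ (k + 1))) :=
  summable_base.indicator _

lemma pFun_le_one {A : Type*} (z : A) (α : ℕ → A) (b : {b : A // b ≠ z}) :
    pFun z α b ≤ 1 := by
  rw [pFun_eq_indicator, ← tsum_base]
  refine Summable.tsum_le_tsum (fun k => ?_) (summable_indicator_base z α b) summable_base
  refine Set.indicator_le_self' (fun k _ => by positivity) k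

/-- Tail of `pFun` beyond index `m`. -/
noncomputable def pTail {A : Type*} (z : A) (m : ℕ) (α : ℕ → A) (b : {b : A // b ≠ z}) : ℝ :=
  ∑' k : ℕ, Set.indicator {k : ℕ | α k = (b : A)} (fun k => (2 : ℝ)⁻¹ ^ (k + 1)) (k + m)

lemma summable_tail_base {A : Type*} (z : A) (m : ℕ) (α : ℕ → A) (b : {b : A // b ≠ z}) :
    Summable (fun k : ℕ => Set.indicator {k : ℕ | α k = (b : A)}
      (fun k => (2 : ℝ)⁻¹ ^ (k + 1)) (k + m)) := by
  apply Summable.comp_injective (summable_indicator_base z α b) (add_left_injective m)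

lemma pTail_nonneg {A : Type*} (z : A) (m : ℕ) (α : ℕ → A) (b : {b : A // b ≠ z}) :
    0 ≤ pTail z m α b :=
  tsum_nonneg fun k => Set.indicator_nonneg (fun k _ => by positivity) _

lemma pFun_split {A : Type*} (z : A) (m : ℕ) (α : ℕ → A) (b : {b : A // b ≠ z}) :
    pFun z α b = (∑ k ∈ Finset.range m, Set.indicator {k : ℕ | α k = (b : A)}
      (fun k => (2 : ℝ)⁻¹ ^ (k + 1)) k) + pTail z m α b := by
  rw [pFun_eq_indicator]
  exact (Summable.sum_add_tsum_nat_add m (summable_indicator_base z α b)).symm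

lemma summable_pTail {A : Type*} (z : A) (m : ℕ) (α : ℕ → A) :
    Summable (pTail z m α) := by
  apply Summable.of_nonneg_of_le (pTail_nonneg z m α) (fun b => ?_) (summable_pFun z α)
  rw [pFun_eq_indicator]
  exact Summable.tsum_le_tsum_of_inj (· + m) (add_left_injective m)
    (fun k _ => Set.indicator_nonneg (fun k _ => by positivity) _) (fun k => le_rfl)
    (summable_tail_base z m α b) (summable_indicator_base z α b)

lemma tsum_pTail_le {A : Type*} (z : A) (m : ℕ) (α : ℕ → A) :
    ∑' b, pTail z m α b ≤ (2 : ℝ)⁻¹ ^ m := by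
  have hgeom : Summable (fun k : ℕ => (2 : ℝ)⁻¹ ^ (k + m + 1)) := by
    apply Summable.congr ((summable_base.mul_left ((2 : ℝ)⁻¹ ^ m)))
    intro k
    ring
  have hsum : ∑' k : ℕ, (2 : ℝ)⁻¹ ^ (k + m + 1) = (2 : ℝ)⁻¹ ^ m := by
    have h : ∀ k : ℕ, (2 : ℝ)⁻¹ ^ (k + m + 1) = (2 : ℝ)⁻¹ ^ m * (2 : ℝ)⁻¹ ^ (k + 1) := by
      intro k; ring
    rw [tsum_congr h, tsum_mul_left, tsum_base, mul_one]
  refine Summable.tsum_le_of_sum_le (summable_pTail z m α) (fun s => ?_)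
  have h1 : ∑ b ∈ s, pTail z m α b
      = ∑' k : ℕ, ∑ b ∈ s, Set.indicator {k : ℕ | α k = (b : A)}
          (fun k => (2 : ℝ)⁻¹ ^ (k + 1)) (k + m) :=
    (Summable.tsum_finsetSum fun b _ => summable_tail_base z m α b).symm
  rw [h1, ← hsum]
  have hnn : ∀ k : ℕ, 0 ≤ ∑ b ∈ s, Set.indicator {k : ℕ | α k = (b : A)}
      (fun k => (2 : ℝ)⁻¹ ^ (k + 1)) (k + m) :=
    fun k => Finset.sum_nonneg fun b _ => Set.indicator_nonneg (fun k _ => by positivity) _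
  have hle : ∀ k : ℕ, ∑ b ∈ s, Set.indicator {k : ℕ | α k = (b : A)}
      (fun k => (2 : ℝ)⁻¹ ^ (k + 1)) (k + m) ≤ (2 : ℝ)⁻¹ ^ (k + m + 1) :=
    fun k => sum_indicator_le_base z α s (k + m)
  exact Summable.tsum_le_tsum hle (Summable.of_nonneg_of_le hnn hle hgeom) hgeom

lemma summable_abs_sub {A : Type*} (z : A) (α β : ℕ → A) :
    Summable (fun b => |pFun z α b - pFun z β b|) := by
  apply Summable.of_nonneg_of_le (fun b => abs_nonneg _) (fun b => ?_)
    ((summable_pFun z α).add (summable_pFun z β))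
  calc |pFun z α b - pFun z β b| ≤ |pFun z α b| + |pFun z β b| := abs_sub _ _
    _ = pFun z α b + pFun z β b := by
        rw [abs_of_nonneg (pFun_nonneg z α b), abs_of_nonneg (pFun_nonneg z β b)]

open Classical in
/-- The key `l¹` estimate: if all coordinates of the difference are at most `ε`,
then the `l¹` norm of the difference is at most `2 m ε + 4 ⬝ 2⁻ᵐ`. -/
lemma l1_bound {A : Type*} (z : A) (m : ℕ) (α β : ℕ → A) (ε : ℝ)
    (hε : ∀ b, |pFun z α b - pFun z β b| ≤ ε) (hεnn : 0 ≤ ε) :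
    ∑' b, |pFun z α b - pFun z β b| ≤ 2 * m * ε + 4 * (2 : ℝ)⁻¹ ^ m := by
  set F : (ℕ → A) → {b : A // b ≠ z} → ℕ → ℝ := fun γ b =>
    Set.indicator {k : ℕ | γ k = (b : A)} (fun k => (2 : ℝ)⁻¹ ^ (k + 1)) with hF
  set T : {b : A // b ≠ z} → ℝ := fun b =>
    ∑ k ∈ Finset.range m, (F α b k - F β b k) with hT
  set S : Finset {b : A // b ≠ z} :=
    (((Finset.range m).image α ∪ (Finset.range m).image β).subtype (· ≠ z)) with hS
  have hd : ∀ b, pFun z α b - pFun z β b = T b + (pTail z m α b - pTail z m β b) := by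
    intro b
    rw [pFun_split z m α b, pFun_split z m β b, hT]
    simp only [hF]
    rw [Finset.sum_sub_distrib]
    ring
  have habs : ∀ b, |pFun z α b - pFun z β b| ≤ |T b| + (pTail z m α b + pTail z m β b) := by
    intro b
    rw [hd b]
    calc |T b + (pTail z m α b - pTail z m β b)|
        ≤ |T b| + |pTail z m α b - pTail z m β b| := abs_add_le _ _
      _ ≤ |T b| + (pTail z m α b + pTail z m β b) := by
          gcongr
          calc |pTail z m α b - pTail z m β b| ≤ |pTail z m α b| + |pTail z m β b| := abs_sub _ _
            _ = pTail z m α b + pTail z m β b := by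
                rw [abs_of_nonneg (pTail_nonneg z m α b), abs_of_nonneg (pTail_nonneg z m β b)]
  have hTzero : ∀ b ∉ S, |T b| = 0 := by
    intro b hb
    have hb' : (b : A) ∉ (Finset.range m).image α ∪ (Finset.range m).image β := by
      intro h
      exact hb (Finset.mem_subtype.2 h)
    have h0 : ∀ k ∈ Finset.range m, F α b k - F β b k = 0 := by
      intro k hk
      have hα : α k ≠ (b : A) := by
        intro h
        exact hb' (Finset.mem_union_left _ (Finset.mem_image.2 ⟨k, hk, h⟩))
      have hβ : β k ≠ (b : A) := by
        intro h
        exact hb' (Finset.mem_union_right _ (Finset.mem_image.2 ⟨k, hk, h⟩))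
      rw [hF]
      simp only [Set.indicator_apply, Set.mem_setOf_eq, hα, hβ, if_false, sub_zero]
    rw [hT]
    simp [Finset.sum_congr rfl h0]
  have hTsummable : Summable (fun b => |T b|) :=
    summable_of_ne_finset_zero hTzero
  have hScard : (S.card : ℝ) ≤ 2 * m := by
    have h1 : S.card ≤ ((Finset.range m).image α ∪ (Finset.range m).image β).card := by
      rw [hS, Finset.card_subtype]
      exact Finset.card_filter_le _ _
    have h2 : ((Finset.range m).image α ∪ (Finset.range m).image β).card ≤ m + m :=
      le_trans (Finset.card_union_le _ _)
        (add_le_add (le_trans (Finset.card_image_le) (by simp))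
          (le_trans (Finset.card_image_le) (by simp)))
    have := le_trans h1 h2
    calc (S.card : ℝ) ≤ ((m + m : ℕ) : ℝ) := by exact_mod_cast this
      _ = 2 * m := by push_cast; ring
  -- bound on ∑' |T|
  have hTbound : ∑' b, |T b| ≤ 2 * m * ε + 2 * (2 : ℝ)⁻¹ ^ m := by
    rw [tsum_eq_sum hTzero]
    have hTb : ∀ b ∈ S, |T b| ≤ ε + (pTail z m α b + pTail z m β b) := by
      intro b _
      have := habs b
      have h2 : |T b| ≤ |pFun z α b - pFun z β b| + (pTail z m α b + pTail z m β b) := by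
        rw [hd b]
        calc |T b| = |(T b + (pTail z m α b - pTail z m β b))
            - (pTail z m α b - pTail z m β b)| := by ring_nf
          _ ≤ |T b + (pTail z m α b - pTail z m β b)| + |pTail z m α b - pTail z m β b| :=
              abs_sub _ _
          _ ≤ _ := by
              gcongr
              calc |pTail z m α b - pTail z m β b| ≤ |pTail z m α b| + |pTail z m β b| :=
                    abs_sub _ _
                _ = pTail z m α b + pTail z m β b := by
                    rw [abs_of_nonneg (pTail_nonneg z m α b),
                      abs_of_nonneg (pTail_nonneg z m β b)]
      exact le_trans h2 (by gcongr; exact hε b)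
    calc ∑ b ∈ S, |T b| ≤ ∑ b ∈ S, (ε + (pTail z m α b + pTail z m β b)) :=
          Finset.sum_le_sum hTb
      _ = S.card * ε + ∑ b ∈ S, (pTail z m α b + pTail z m β b) := by
          rw [Finset.sum_add_distrib, Finset.sum_const, nsmul_eq_mul]
      _ ≤ 2 * m * ε + ((2 : ℝ)⁻¹ ^ m + (2 : ℝ)⁻¹ ^ m) := by
          gcongr
          · rw [Finset.sum_add_distrib]
            gcongr
            · calc ∑ b ∈ S, pTail z m α b ≤ ∑' b, pTail z m α b :=
                  Summable.sum_le_tsum S (fun b _ => pTail_nonneg z m α b) (summable_pTail z m α)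
                _ ≤ _ := tsum_pTail_le z m α
            · calc ∑ b ∈ S, pTail z m β b ≤ ∑' b, pTail z m β b :=
                  Summable.sum_le_tsum S (fun b _ => pTail_nonneg z m β b) (summable_pTail z m β)
                _ ≤ _ := tsum_pTail_le z m β
      _ = 2 * m * ε + 2 * (2 : ℝ)⁻¹ ^ m := by ring
  calc ∑' b, |pFun z α b - pFun z β b|
      ≤ ∑' b, (|T b| + (pTail z m α b + pTail z m β b)) :=
        Summable.tsum_le_tsum habs (summable_abs_sub z α β)
          (hTsummable.add ((summable_pTail z m α).add (summable_pTail z m β)))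
    _ = ∑' b, |T b| + (∑' b, pTail z m α b + ∑' b, pTail z m β b) := by
        rw [Summable.tsum_add hTsummable ((summable_pTail z m α).add (summable_pTail z m β)),
          Summable.tsum_add (summable_pTail z m α) (summable_pTail z m β)]
    _ ≤ (2 * m * ε + 2 * (2 : ℝ)⁻¹ ^ m) + ((2 : ℝ)⁻¹ ^ m + (2 : ℝ)⁻¹ ^ m) :=
        add_le_add hTbound (add_le_add (tsum_pTail_le z m α) (tsum_pTail_le z m β))
    _ = 2 * m * ε + 4 * (2 : ℝ)⁻¹ ^ m := by ring

lemma pp_coe_sub {A : Type*} (z : A) (α β : ℕ → A) (P : ℝ≥0∞) [Fact (1 ≤ P)]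
    (b : {b : A // b ≠ z}) :
    (pp z β P - pp z α P : lp (fun _ : {b : A // b ≠ z} => ℝ) P) b
      = pFun z β b - pFun z α b := rfl

/-- If the `lp` norms tend to zero, the `l¹` sums of absolute differences tend to zero. -/
lemma tendsto_l1_of_tendsto_lp {A : Type*} [Infinite A] (z : A) (P : ℝ≥0∞) [Fact (1 ≤ P)]
    (α : ℕ → A) (αs : ℕ → ℕ → A)
    (h : Tendsto (fun n : ℕ => ‖pp z (αs n) P - pp z α P‖) atTop (𝓝 0)) :
    Tendsto (fun n : ℕ => ∑' b, |pFun z (αs n) b - pFun z α b|) atTop (𝓝 0) := by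
  have hP0 : P ≠ 0 := by
    intro h0
    have : (1 : ℝ≥0∞) ≤ 0 := h0 ▸ (Fact.out : 1 ≤ P)
    simp at this
  rw [Metric.tendsto_atTop]
  intro ε hε
  obtain ⟨m, hm⟩ : ∃ m : ℕ, 4 * (2 : ℝ)⁻¹ ^ m < ε / 2 := by
    obtain ⟨m, hm⟩ := exists_pow_lt_of_lt_one (x := ε / 8) (y := (2 : ℝ)⁻¹)
      (by positivity) (by norm_num)
    exact ⟨m, by linarith⟩
  set δ : ℝ := ε / (4 * (m + 1)) with hδ
  have hδpos : 0 < δ := by positivity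
  rw [Metric.tendsto_atTop] at h
  obtain ⟨N, hN⟩ := h δ hδpos
  refine ⟨N, fun n hn => ?_⟩
  have hnorm : ‖pp z (αs n) P - pp z α P‖ < δ := by
    have := hN n hn
    rwa [Real.dist_eq, sub_zero, abs_of_nonneg (norm_nonneg _)] at this
  have hcoord : ∀ b, |pFun z (αs n) b - pFun z α b| ≤ ‖pp z (αs n) P - pp z α P‖ := by
    intro b
    have := lp.norm_apply_le_norm hP0 (pp z (αs n) P - pp z α P) b
    rwa [pp_coe_sub, Real.norm_eq_abs] at this
  have hbound := l1_bound z m (αs n) α ‖pp z (αs n) P - pp z α P‖ hcoord (norm_nonneg _)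
  have hS_nonneg : 0 ≤ ∑' b, |pFun z (αs n) b - pFun z α b| :=
    tsum_nonneg fun b => abs_nonneg _
  rw [Real.dist_eq, sub_zero, abs_of_nonneg hS_nonneg]
  calc ∑' b, |pFun z (αs n) b - pFun z α b|
      ≤ 2 * m * ‖pp z (αs n) P - pp z α P‖ + 4 * (2 : ℝ)⁻¹ ^ m := hbound
    _ < 2 * m * δ + ε / 2 := by
        rcases Nat.eq_zero_or_pos m with hm0 | hm0
        · subst hm0
          simp only [Nat.cast_zero, mul_zero, zero_mul, zero_add]
          linarith
        · have : (0:ℝ) < 2 * m := by positivity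
          have h1 : 2 * (m:ℝ) * ‖pp z (αs n) P - pp z α P‖ < 2 * m * δ := by
            apply mul_lt_mul_of_pos_left hnorm this
          linarith
    _ ≤ ε / 2 + ε / 2 := by
        have hm1 : (0:ℝ) < (m:ℝ) + 1 := by positivity
        have hfrac : (m:ℝ) / ((m:ℝ) + 1) ≤ 1 := by
          rw [div_le_one hm1]; linarith
        have h2mδ : 2 * (m:ℝ) * δ ≤ ε / 2 := by
          calc 2 * (m:ℝ) * δ = ((m:ℝ) / ((m:ℝ) + 1)) * (ε / 2) := by
                rw [hδ]; field_simp; ring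
            _ ≤ 1 * (ε / 2) := mul_le_mul_of_nonneg_right hfrac (by positivity)
            _ = ε / 2 := one_mul _
        linarith
    _ = ε := by ring

/-- If the `l¹` sums tend to zero, then the `lp` norms tend to zero for any `1 ≤ Q < ∞`. -/
lemma tendsto_lp_of_tendsto_l1 {A : Type*} [Infinite A] (z : A) (Q : ℝ≥0∞) [Fact (1 ≤ Q)]
    (hQ : Q ≠ ∞) (α : ℕ → A) (αs : ℕ → ℕ → A)
    (h : Tendsto (fun n : ℕ => ∑' b, |pFun z (αs n) b - pFun z α b|) atTop (𝓝 0)) :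
    Tendsto (fun n : ℕ => ‖pp z (αs n) Q - pp z α Q‖) atTop (𝓝 0) := by
  have hQ1 : (1:ℝ) ≤ Q.toReal := by
    rw [← ENNReal.toReal_one]
    exact ENNReal.toReal_mono hQ (Fact.out : 1 ≤ Q)
  have hQpos : 0 < Q.toReal := lt_of_lt_of_le one_pos hQ1
  set S : ℕ → ℝ := fun n => ∑' b, |pFun z (αs n) b - pFun z α b| with hSdef
  have hS_nonneg : ∀ n, 0 ≤ S n := fun n => tsum_nonneg fun b => abs_nonneg _
  have hkey : ∀ n, ‖pp z (αs n) Q - pp z α Q‖ ≤ (S n) ^ (1 / Q.toReal) := by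
    intro n
    rw [lp.norm_eq_tsum_rpow hQpos]
    apply Real.rpow_le_rpow (tsum_nonneg fun b => Real.rpow_nonneg (norm_nonneg _) _)
      ?_ (by positivity)
    have hsummable : Summable fun b : {b : A // b ≠ z} =>
        ‖(pp z (αs n) Q - pp z α Q : lp (fun _ : {b : A // b ≠ z} => ℝ) Q) b‖ ^ Q.toReal :=
      (memℓp_gen_iff hQpos).1 (lp.memℓp _)
    refine Summable.tsum_le_tsum (fun b => ?_) hsummable (summable_abs_sub z (αs n) α)
    rw [pp_coe_sub, Real.norm_eq_abs]
    set t : ℝ := |pFun z (αs n) b - pFun z α b| with ht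
    have ht0 : 0 ≤ t := abs_nonneg _
    have ht1 : t ≤ 1 := by
      rw [ht, abs_sub_le_iff]
      constructor
      · linarith [pFun_le_one z (αs n) b, pFun_nonneg z α b]
      · linarith [pFun_le_one z α b, pFun_nonneg z (αs n) b]
    rcases eq_or_lt_of_le ht0 with ht0' | ht0'
    · rw [← ht0', Real.zero_rpow (ne_of_gt hQpos)]
    · calc t ^ Q.toReal ≤ t ^ (1:ℝ) :=
          Real.rpow_le_rpow_of_exponent_ge ht0' ht1 hQ1
        _ = t := Real.rpow_one t
  apply squeeze_zero (fun n => norm_nonneg _) hkey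
  have hcont : ContinuousAt (fun x : ℝ => x ^ (1 / Q.toReal)) 0 :=
    Real.continuousAt_rpow_const 0 (1 / Q.toReal) (Or.inr (by positivity))
  have := hcont.tendsto.comp h
  rwa [Real.zero_rpow (by positivity : 1 / Q.toReal ≠ 0)] at this

end Aux

/-- Remark 3.1. The topological structure of `ω_p^A` is independent of
`p`: for all `p, q ∈ [1, ∞)` and all sequences `(αⁿ)` and `α` in `N(A)`,
`‖p_p(αⁿ) - p_p(α)‖_p → 0` iff `‖p_q(αⁿ) - p_q(α)‖_q → 0`. -/
theorem omega_topology_independent_of_p {A : Type*} [Infinite A] (z : A) (P Q : ℝ≥0∞)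
    [Fact (1 ≤ P)] [Fact (1 ≤ Q)] (hP : P ≠ ∞) (hQ : Q ≠ ∞)
    (α : ℕ → A) (αs : ℕ → ℕ → A) :
    Tendsto (fun n : ℕ => ‖pp z (αs n) P - pp z α P‖) atTop (𝓝 0) ↔
      Tendsto (fun n : ℕ => ‖pp z (αs n) Q - pp z α Q‖) atTop (𝓝 0) := by
  constructor
  · intro h
    exact tendsto_lp_of_tendsto_l1 z Q hQ α αs (tendsto_l1_of_tendsto_lp z P α αs h)
  · intro h
    exact tendsto_lp_of_tendsto_l1 z P hP α αs (tendsto_l1_of_tendsto_lp z Q α αs h)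
end
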